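/- arXiv:2508.19347 — 2 statements merged into one kernel-verified Lean document; each statement's English description precedes it below -/
import Mathlib

section
/- Let F : X → Y be a bounded linear operator between Hilbert spaces with x† = F*ω for some ω ∈ Y. Let x_α be the Tikhonov-regularized solution x_α = (F*F + αI)⁻¹ F* y^δ with ‖y^δ − F x†‖ ≤ δ. Then ‖x_α − x†‖ ≤ δ/(2√α) + (√α/2)‖ω‖, and choosing α = δ/‖ω‖ yields ‖x_α − x†‖ ≤ √(δ‖ω‖). -/
open scoped RealInnerProductSpace

private lemma aux_alg (s t c α : ℝ) (hα : 0 < α) (hs : 0 ≤ s) (hc : 0 ≤ c)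
    (h : t ^ 2 + α * s ^ 2 ≤ c * t) : s ≤ c / (2 * Real.sqrt α) := by
  have hsq : s ^ 2 ≤ c ^ 2 / (4 * α) := by
    rw [le_div_iff₀ (by positivity)]
    nlinarith [sq_nonneg (c / 2 - t)]
  have hkey : c ^ 2 / (4 * α) = (c / (2 * Real.sqrt α)) ^ 2 := by
    rw [div_pow, mul_pow, Real.sq_sqrt hα.le]
    norm_num
  rw [hkey] at hsq
  have := Real.sqrt_le_sqrt hsq
  rwa [Real.sqrt_sq hs, Real.sqrt_sq (by positivity)] at this

/-- convergence rate for linear Tikhonov regularization under the source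
condition `x† = F* ω`. The regularized solution `x_α = (F*F + αI)⁻¹ F* y^δ`
(characterized by the normal equation `F*(F x_α) + α x_α = F* y^δ`) with data error
`‖y^δ − F x†‖ ≤ δ` satisfies `‖x_α − x†‖ ≤ δ/(2√α) + (√α/2)‖ω‖`; and for the choice
`α = δ/‖ω‖` one gets `‖x_α − x†‖ ≤ √(δ‖ω‖)`. -/
theorem stmt14 {X Y : Type*} [NormedAddCommGroup X] [InnerProductSpace ℝ X] [CompleteSpace X]
    [NormedAddCommGroup Y] [InnerProductSpace ℝ Y] [CompleteSpace Y]
    (F : X →L[ℝ] Y) (ω : Y) (xdag : X)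
    (hsource : xdag = ContinuousLinearMap.adjoint F ω)
    (yδ : Y) (δ : ℝ) (hδ : 0 ≤ δ) (hnoise : ‖yδ - F xdag‖ ≤ δ)
    (α : ℝ) (hα : 0 < α) (xα : X)
    (hxα : ContinuousLinearMap.adjoint F (F xα) + α • xα =
      ContinuousLinearMap.adjoint F yδ) :
    ‖xα - xdag‖ ≤ δ / (2 * Real.sqrt α) + (Real.sqrt α / 2) * ‖ω‖ ∧
    (α = δ / ‖ω‖ → ‖xα - xdag‖ ≤ Real.sqrt (δ * ‖ω‖)) := by
  set A := ContinuousLinearMap.adjoint F with hA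
  set e := xα - xdag with he
  set r := yδ - F xdag with hr
  have hkey : A (F e) + α • e = A r - α • (A ω) := by
    simp only [he, hr, map_sub, smul_sub, hsource]
    rw [sub_add_sub_comm, hxα]
    abel
  -- take inner product with e
  have hinner : ⟪F e, F e⟫ + α * ⟪e, e⟫ = ⟪r, F e⟫ - α * ⟪ω, F e⟫ := by
    have := congrArg (fun z => ⟪z, e⟫) hkey
    simpa [hA, inner_add_left, inner_sub_left, inner_smul_left,
      ContinuousLinearMap.adjoint_inner_left] using this
  have hFe : ⟪F e, F e⟫ = ‖F e‖ ^ 2 := real_inner_self_eq_norm_sq (F e)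
  have hee : ⟪e, e⟫ = ‖e‖ ^ 2 := real_inner_self_eq_norm_sq e
  have hb1 : ⟪r, F e⟫ ≤ δ * ‖F e‖ :=
    (real_inner_le_norm r (F e)).trans (by gcongr)
  have hb2 : -⟪ω, F e⟫ ≤ ‖ω‖ * ‖F e‖ := by
    have := real_inner_le_norm ω (-(F e))
    simpa [norm_neg] using this
  have hquad : ‖F e‖ ^ 2 + α * ‖e‖ ^ 2 ≤ (δ + α * ‖ω‖) * ‖F e‖ := by
    rw [hFe, hee] at hinner
    nlinarith [hinner, hb1, hb2, hα.le]
  have hmain : ‖e‖ ≤ (δ + α * ‖ω‖) / (2 * Real.sqrt α) :=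
    aux_alg ‖e‖ ‖F e‖ (δ + α * ‖ω‖) α hα (norm_nonneg _) (by positivity) hquad
  have hsqα : 0 < Real.sqrt α := Real.sqrt_pos.mpr hα
  have hsplit : (δ + α * ‖ω‖) / (2 * Real.sqrt α)
      = δ / (2 * Real.sqrt α) + (Real.sqrt α / 2) * ‖ω‖ := by
    rw [add_div]
    congr 1
    rw [div_eq_iff (by positivity)]
    linear_combination (-‖ω‖) * Real.mul_self_sqrt hα.le
  have h1 : ‖e‖ ≤ δ / (2 * Real.sqrt α) + (Real.sqrt α / 2) * ‖ω‖ := hsplit ▸ hmain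
  refine ⟨h1, fun hαδ => ?_⟩
  have hω : 0 < ‖ω‖ := by
    rcases eq_or_lt_of_le (norm_nonneg ω) with h | h
    · exfalso; rw [hαδ, ← h, div_zero] at hα; exact lt_irrefl 0 hα
    · exact h
  have hδpos : 0 < δ := by
    by_contra h
    push_neg at h
    have : δ = 0 := le_antisymm h hδ
    rw [hαδ, this, zero_div] at hα
    exact lt_irrefl 0 hα
  have hαval : α = δ / ‖ω‖ := hαδ
  have hsδ : 0 < Real.sqrt δ := Real.sqrt_pos.mpr hδpos
  have hsω : 0 < Real.sqrt ‖ω‖ := Real.sqrt_pos.mpr hω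
  have ha : Real.sqrt α = Real.sqrt δ / Real.sqrt ‖ω‖ := by
    rw [hαval, Real.sqrt_div hδ]
  have heq : δ / (2 * Real.sqrt α) + (Real.sqrt α / 2) * ‖ω‖ = Real.sqrt (δ * ‖ω‖) := by
    rw [ha, Real.sqrt_mul hδ]
    have hd : Real.sqrt δ * Real.sqrt δ = δ := Real.mul_self_sqrt hδ
    have hw : Real.sqrt ‖ω‖ * Real.sqrt ‖ω‖ = ‖ω‖ := Real.mul_self_sqrt hω.le
    field_simp
    linear_combination (-δ) * hw +
      (‖ω‖ - 2 * (Real.sqrt ‖ω‖ * Real.sqrt ‖ω‖)) * hd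
  exact heq ▸ h1
end

section
/- Let σ be a bounded sigmoidal function, Ω_Y ⊆ ℝⁿ bounded, and V a compact subset of C(Ω̄_Y). Then for every ε > 0 there exist N ∈ ℕ, vectors w_j ∈ ℝⁿ and ζ_j ∈ ℝ (independent of the target function) such that for every y ∈ V there are coefficients c_j(y) ∈ ℝ with sup_{t ∈ Ω̄_Y} |y(t) − Σ_{j=1}^N c_j(y) σ(w_jᵀt + ζ_j)| < ε. -/
open RealInnerProductSpace


section OneDim
variable (σ : ℝ → ℝ)

lemma sig_pos (hσ_mono : StrictMono σ)
    (hσ_bot : Filter.Tendsto σ Filter.atBot (nhds 0)) (x : ℝ) : 0 < σ x := by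
  have h1 : σ (x - 1) < σ x := hσ_mono (by linarith)
  have h0 : (0:ℝ) ≤ σ (x - 1) := by
    refine le_of_tendsto hσ_bot ?_
    filter_upwards [Filter.eventually_le_atBot (x - 1)] with y hy
    exact (hσ_mono.le_iff_le).2 hy
  linarith

lemma sig_lt_one (hσ_mono : StrictMono σ)
    (hσ_top : Filter.Tendsto σ Filter.atTop (nhds 1)) (x : ℝ) : σ x < 1 := by
  have h1 : σ x < σ (x + 1) := hσ_mono (by linarith)
  have h0 : σ (x + 1) ≤ 1 := by
    refine ge_of_tendsto hσ_top ?_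
    filter_upwards [Filter.eventually_ge_atTop (x + 1)] with y hy
    exact (hσ_mono.le_iff_le).2 hy
  linarith

set_option maxHeartbeats 1000000 in
lemma approx1d (hσ_mono : StrictMono σ)
    (hσ_top : Filter.Tendsto σ Filter.atTop (nhds 1))
    (hσ_bot : Filter.Tendsto σ Filter.atBot (nhds 0))
    (G : ℝ → ℝ) (hG : Continuous G) (A B : ℝ) (hAB : A < B)
    (ε : ℝ) (hε : 0 < ε) :
    ∃ (m : ℕ) (a b c : Fin m → ℝ), ∀ x ∈ Set.Icc A B,
      |G x - ∑ j, c j * σ (a j * x + b j)| ≤ ε := by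
  have hσ01 : ∀ u, 0 < σ u ∧ σ u < 1 := fun u =>
    ⟨sig_pos σ hσ_mono hσ_bot u, sig_lt_one σ hσ_mono hσ_top u⟩
  have hUC : UniformContinuousOn G (Set.Icc A B) :=
    isCompact_Icc.uniformContinuousOn_of_continuous hG.continuousOn
  set ε₁ : ℝ := ε / 4 with hε₁def
  have hε₁ : 0 < ε₁ := by rw [hε₁def]; linarith
  obtain ⟨δ, hδ, hδ'⟩ := (Metric.uniformContinuousOn_iff).1 hUC ε₁ hε₁
  obtain ⟨m, hm⟩ := exists_nat_gt ((B - A) / δ)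
  have hm0 : 0 < (m:ℝ) := lt_trans (div_pos (by linarith) hδ) hm
  have hmnat : 0 < m := by exact_mod_cast hm0
  set h : ℝ := (B - A) / m with hhdef
  have hh : 0 < h := div_pos (by linarith) hm0
  have hmh : (m:ℝ) * h = B - A := by rw [hhdef]; field_simp
  have hhδ : h < δ := by
    rw [hhdef, div_lt_iff₀ hm0]
    calc B - A = ((B - A)/δ) * δ := by field_simp
    _ < m * δ := mul_lt_mul_of_pos_right hm hδ
    _ = δ * m := by ring
  set X : ℕ → ℝ := fun i => A + i * h with hXdef
  have hXmem : ∀ i : ℕ, i ≤ m → X i ∈ Set.Icc A B := by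
    intro i hi
    have hi' : (i:ℝ) ≤ m := by exact_mod_cast hi
    constructor
    · simp only [hXdef]; nlinarith [(Nat.cast_nonneg i : (0:ℝ) ≤ i)]
    · simp only [hXdef]; nlinarith
  have hc : ∀ i : ℕ, i < m → |G (X (i+1)) - G (X i)| ≤ ε₁ := by
    intro i hi
    have h1 := hδ' (X (i+1)) (hXmem _ hi) (X i) (hXmem _ (le_of_lt hi)) ?_
    · rw [Real.dist_eq] at h1; exact le_of_lt h1
    · rw [Real.dist_eq]
      have he : X (i+1) - X i = h := by simp only [hXdef]; push_cast; ring
      rw [he, abs_of_pos hh]; exact hhδ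
  set ε₂ : ℝ := 1 / m with hε₂def
  have hε₂ : 0 < ε₂ := div_pos one_pos hm0
  have hmε₂ : (m:ℝ) * ε₂ = 1 := by rw [hε₂def]; field_simp
  have htop : ∀ᶠ u in Filter.atTop, 1 - ε₂ < σ u :=
    hσ_top.eventually (eventually_gt_nhds (by linarith))
  have hbot : ∀ᶠ u in Filter.atBot, σ u < ε₂ := hσ_bot.eventually (eventually_lt_nhds hε₂)
  obtain ⟨u₁, hu₁⟩ := htop.exists_forall_of_atTop
  obtain ⟨u₀, hu₀⟩ := Filter.eventually_atBot.1 hbot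
  obtain ⟨M, hM, hMh1, hMh0⟩ : ∃ M : ℝ, 0 < M ∧ u₁ ≤ M * h ∧ -(M * h) ≤ u₀ := by
    refine ⟨(|u₁| + |u₀| + 1)/h, div_pos (by positivity) hh, ?_, ?_⟩
    · rw [div_mul_cancel₀ _ (ne_of_gt hh)]
      have := le_abs_self u₁; have := abs_nonneg u₀; linarith
    · rw [div_mul_cancel₀ _ (ne_of_gt hh)]
      have := neg_abs_le u₀; have := abs_nonneg u₁; linarith
  refine ⟨m + 1, Fin.snoc (fun _ : Fin m => M) 0,
    Fin.snoc (fun j : Fin m => -(M * X ((j:ℕ)+1))) 0,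
    Fin.snoc (fun j : Fin m => G (X ((j:ℕ)+1)) - G (X (j:ℕ))) (G A / σ 0), ?_⟩
  intro x hx
  rw [Fin.sum_univ_castSucc]
  simp only [Fin.snoc_castSucc, Fin.snoc_last]
  have hσ0 : σ 0 ≠ 0 := ne_of_gt (hσ01 0).1
  rw [show G A / σ 0 * σ (0 * x + 0) = G A by rw [zero_mul, add_zero]; field_simp]
  rw [Fin.sum_univ_eq_sum_range (fun j => (G (X (j+1)) - G (X j)) * σ (M * x + -(M * X (j+1))))]
  set k : ℕ := Nat.floor ((x - A) / h) with hkdef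
  have hxA : 0 ≤ (x - A) / h := div_nonneg (by linarith [hx.1]) (le_of_lt hh)
  have hkm : k ≤ m := by
    have h1 : (x - A) / h ≤ m := by
      rw [div_le_iff₀ hh]; nlinarith [hx.2]
    calc k ≤ Nat.floor ((m:ℝ)) := Nat.floor_le_floor h1
    _ = m := Nat.floor_natCast m
  have hXk : X k ≤ x := by
    have hfl : (k:ℝ) ≤ (x - A)/h := Nat.floor_le hxA
    have h2 : (k:ℝ) * h ≤ x - A := (le_div_iff₀ hh).1 hfl
    simp only [hXdef]; linarith
  have hXk1 : x < X (k+1) := by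
    have hfl : (x - A)/h < (k:ℝ) + 1 := Nat.lt_floor_add_one _
    have h2 : x - A < ((k:ℝ)+1) * h := (div_lt_iff₀ hh).1 hfl
    simp only [hXdef]; push_cast; linarith
  have htel : ∑ j ∈ Finset.range k, (G (X (j+1)) - G (X j)) = G (X k) - G A := by
    rw [Finset.sum_range_sub (fun i => G (X i))]
    simp [hXdef]
  have hbound : ∀ j ∈ Finset.range m,
      |(G (X (j+1)) - G (X j)) * σ (M * x + -(M * X (j+1))) -
        (G (X (j+1)) - G (X j)) * (if j < k then 1 else 0)| ≤
      ε₁ * ε₂ + (if j + 1 = k then ε₁ else 0) + (if j = k then ε₁ else 0) := by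
    intro j hj
    rw [Finset.mem_range] at hj
    rw [← mul_sub, abs_mul]
    have hcj := hc j hj
    have harg : M * x + -(M * X (j+1)) = M * (x - X (j+1)) := by ring
    rw [harg]
    have hs1 := (hσ01 (M * (x - X (j+1)))).1
    have hs2 := (hσ01 (M * (x - X (j+1)))).2
    rcases lt_trichotomy (j+1) k with hlt | heq | hgt
    · have hind : (if j < k then (1:ℝ) else 0) = 1 := if_pos (by omega)
      rw [hind]
      have hxd : h ≤ x - X (j+1) := by
        have hXle : X (j+1) + h ≤ X k := by
          simp only [hXdef]; push_cast
          have : ((j:ℝ)+1+1) ≤ k := by exact_mod_cast hlt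
          nlinarith
        linarith
      have hge : u₁ ≤ M * (x - X (j+1)) := le_trans hMh1 (by nlinarith)
      have hs := hu₁ _ hge
      have habs : |σ (M * (x - X (j+1))) - 1| ≤ ε₂ := by
        rw [abs_le]; constructor <;> linarith
      have hmain : |G (X (j+1)) - G (X j)| * |σ (M * (x - X (j+1))) - 1| ≤ ε₁ * ε₂ :=
        mul_le_mul hcj habs (abs_nonneg _) (le_of_lt hε₁)
      rw [if_neg (by omega : ¬ j + 1 = k), if_neg (by omega : ¬ j = k)]
      linarith
    · have hind : (if j < k then (1:ℝ) else 0) = 1 := if_pos (by omega)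
      rw [hind, if_pos heq]
      have habs : |σ (M * (x - X (j+1))) - 1| ≤ 1 := by rw [abs_le]; constructor <;> linarith
      have hmain : |G (X (j+1)) - G (X j)| * |σ (M * (x - X (j+1))) - 1| ≤ ε₁ * 1 :=
        mul_le_mul hcj habs (abs_nonneg _) (le_of_lt hε₁)
      have hnn : (0:ℝ) ≤ if j = k then ε₁ else 0 := by
        split <;> [exact le_of_lt hε₁; exact le_refl 0]
      rw [mul_one] at hmain
      have h0 : 0 ≤ ε₁ * ε₂ := le_of_lt (mul_pos hε₁ hε₂)
      linarith
    · have hind : (if j < k then (1:ℝ) else 0) = 0 := if_neg (by omega)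
      rw [hind, sub_zero]
      rcases Nat.lt_or_ge k j with hgt2 | hge2
      · have hxd : x - X (j+1) ≤ -h := by
          have hXle : X (k+1) + h ≤ X (j+1) := by
            simp only [hXdef]; push_cast
            have : ((k:ℝ)+1+1) ≤ (j:ℝ)+1 := by
              have : k + 2 ≤ j + 1 := by omega
              exact_mod_cast this
            nlinarith
          linarith
        have hle : M * (x - X (j+1)) ≤ u₀ := le_trans (by nlinarith) hMh0
        have hs := hu₀ _ hle
        have habs : |σ (M * (x - X (j+1)))| ≤ ε₂ := by rw [abs_le]; constructor <;> linarith
        have hmain : |G (X (j+1)) - G (X j)| * |σ (M * (x - X (j+1)))| ≤ ε₁ * ε₂ :=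
          mul_le_mul hcj habs (abs_nonneg _) (le_of_lt hε₁)
        rw [if_neg (by omega : ¬ j + 1 = k), if_neg (by omega : ¬ j = k)]
        linarith
      · have hjk : j = k := by omega
        rw [if_pos hjk]
        have habs : |σ (M * (x - X (j+1)))| ≤ 1 := by rw [abs_le]; constructor <;> linarith
        have hmain : |G (X (j+1)) - G (X j)| * |σ (M * (x - X (j+1)))| ≤ ε₁ * 1 :=
          mul_le_mul hcj habs (abs_nonneg _) (le_of_lt hε₁)
        have hnn : (0:ℝ) ≤ if j + 1 = k then ε₁ else 0 := by
          split <;> [exact le_of_lt hε₁; exact le_refl 0]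
        rw [mul_one] at hmain
        have h0 : 0 ≤ ε₁ * ε₂ := le_of_lt (mul_pos hε₁ hε₂)
        linarith
  set T := ∑ j ∈ Finset.range m, (G (X (j+1)) - G (X j)) * σ (M * x + -(M * X (j+1))) with hT
  set H := ∑ j ∈ Finset.range m, (G (X (j+1)) - G (X j)) * (if j < k then (1:ℝ) else 0) with hH
  have hHval : H = G (X k) - G A := by
    have hstep : ∀ j, (G (X (j+1)) - G (X j)) * (if j < k then (1:ℝ) else 0) =
        if j < k then (G (X (j+1)) - G (X j)) else 0 := by intro j; split <;> simp
    calc H = ∑ j ∈ Finset.range m, (if j < k then (G (X (j+1)) - G (X j)) else 0) :=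
        Finset.sum_congr rfl (fun j _ => hstep j)
    _ = ∑ j ∈ (Finset.range m).filter (· < k), (G (X (j+1)) - G (X j)) :=
        (Finset.sum_filter _ _).symm
    _ = ∑ j ∈ Finset.range k, (G (X (j+1)) - G (X j)) := by
        congr 1
        ext j
        simp only [Finset.mem_filter, Finset.mem_range]
        omega
    _ = G (X k) - G A := htel
  have hTH : |T - H| ≤ 3 * ε₁ := by
    have step1 : |T - H| ≤ ∑ j ∈ Finset.range m,
        (ε₁ * ε₂ + (if j + 1 = k then ε₁ else 0) + (if j = k then ε₁ else 0)) := by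
      rw [hT, hH, ← Finset.sum_sub_distrib]
      exact le_trans (Finset.abs_sum_le_sum_abs _ _) (Finset.sum_le_sum hbound)
    have s0 : ∑ _j ∈ Finset.range m, ε₁ * ε₂ = ε₁ := by
      rw [Finset.sum_const, Finset.card_range, nsmul_eq_mul]
      nlinarith
    have s1 : ∑ j ∈ Finset.range m, (if j + 1 = k then ε₁ else 0) ≤ ε₁ := by
      have hpt : ∀ j ∈ Finset.range m, (if j + 1 = k then ε₁ else 0) ≤ (if j = k - 1 then ε₁ else 0) := by
        intro j _
        rcases eq_or_ne (j+1) k with he | he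
        · rw [if_pos he, if_pos (by omega)]
        · rw [if_neg he]
          split <;> [exact le_of_lt hε₁; exact le_refl 0]
      calc ∑ j ∈ Finset.range m, (if j + 1 = k then ε₁ else 0)
          ≤ ∑ j ∈ Finset.range m, (if j = k - 1 then ε₁ else 0) := Finset.sum_le_sum hpt
      _ = if k - 1 ∈ Finset.range m then ε₁ else 0 := Finset.sum_ite_eq' _ _ _
      _ ≤ ε₁ := by split <;> [exact le_refl _; exact le_of_lt hε₁]
    have s2 : ∑ j ∈ Finset.range m, (if j = k then ε₁ else 0) ≤ ε₁ := by
      calc ∑ j ∈ Finset.range m, (if j = k then ε₁ else 0)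
          = if k ∈ Finset.range m then ε₁ else 0 := Finset.sum_ite_eq' _ _ _
      _ ≤ ε₁ := by split <;> [exact le_refl _; exact le_of_lt hε₁]
    have := Finset.sum_add_distrib (s := Finset.range m)
      (f := fun j => ε₁ * ε₂ + (if j + 1 = k then ε₁ else 0)) (g := fun j => if j = k then ε₁ else 0)
    rw [this] at step1
    have := Finset.sum_add_distrib (s := Finset.range m)
      (f := fun _j => ε₁ * ε₂) (g := fun j => if j + 1 = k then ε₁ else 0)
    rw [this, s0] at step1
    linarith
  have hGxk : |G x - G (X k)| ≤ ε₁ := by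
    have hXkmem : X k ∈ Set.Icc A B := hXmem k hkm
    have hd := hδ' x hx (X k) hXkmem ?_
    · rw [Real.dist_eq] at hd; exact le_of_lt hd
    · rw [Real.dist_eq]
      have hXkh : X (k+1) = X k + h := by simp only [hXdef]; push_cast; ring
      rw [abs_of_nonneg (by linarith)]
      linarith
  have hkey : G x - (T + G A) = (G x - G (X k)) + (H - T) := by rw [hHval]; ring
  calc |G x - (T + G A)| = |(G x - G (X k)) + (H - T)| := by rw [hkey]
  _ ≤ |G x - G (X k)| + |H - T| := abs_add_le _ _
  _ ≤ ε₁ + 3 * ε₁ := by rw [abs_sub_comm H T]; exact add_le_add hGxk hTH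
  _ = ε := by rw [hε₁def]; ring

end OneDim

section Density
variable {n : ℕ} (σ : ℝ → ℝ)

set_option maxHeartbeats 1000000 in
lemma dense_sigspan (hσ_mono : StrictMono σ) (hσ_cont : Continuous σ)
    (hσ_top : Filter.Tendsto σ Filter.atTop (nhds 1))
    (hσ_bot : Filter.Tendsto σ Filter.atBot (nhds 0))
    (K : Set (EuclideanSpace ℝ (Fin n))) (hK : IsCompact K) :
    Dense (↑(Submodule.span ℝ {f : C(K, ℝ) | ∃ (w : EuclideanSpace ℝ (Fin n)) (ζ : ℝ),
      ∀ t : K, f t = σ (⟪w, (t : EuclideanSpace ℝ (Fin n))⟫ + ζ)}) : Set C(K, ℝ)) := by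
  haveI : CompactSpace K := isCompact_iff_compactSpace.1 hK
  set gens : Set C(K, ℝ) := {f : C(K, ℝ) | ∃ (w : EuclideanSpace ℝ (Fin n)) (ζ : ℝ),
      ∀ t : K, f t = σ (⟪w, (t : EuclideanSpace ℝ (Fin n))⟫ + ζ)} with hgens
  set S : Submodule ℝ C(K, ℝ) := Submodule.span ℝ gens with hS
  have hinner_cont : ∀ w : EuclideanSpace ℝ (Fin n),
      Continuous (fun t : K => ⟪w, (t : EuclideanSpace ℝ (Fin n))⟫) :=
    fun w => Continuous.inner continuous_const continuous_subtype_val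
  have hbasic : ∀ (w : EuclideanSpace ℝ (Fin n)) (ζ : ℝ),
      (⟨fun t : K => σ (⟪w, (t : EuclideanSpace ℝ (Fin n))⟫ + ζ),
        hσ_cont.comp ((hinner_cont w).add continuous_const)⟩ : C(K, ℝ)) ∈ S :=
    fun w ζ => Submodule.subset_span ⟨w, ζ, fun t => rfl⟩
  set expmap : EuclideanSpace ℝ (Fin n) → C(K, ℝ) := fun w =>
    ⟨fun t => Real.exp (⟪w, (t : EuclideanSpace ℝ (Fin n))⟫),
      Real.continuous_exp.comp (hinner_cont w)⟩ with hexpmap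
  obtain ⟨R, hR⟩ := hK.isBounded.subset_closedBall 0
  -- each exponential is in the closure of S
  have hexp_cl : ∀ w, expmap w ∈ closure (S : Set C(K, ℝ)) := by
    intro w
    rw [Metric.mem_closure_iff]
    intro ε hε
    set C : ℝ := ‖w‖ * |R| + 1 with hC
    have hC1 : (0:ℝ) < C := by positivity
    have hrange : ∀ t : K, ⟪w, (t : EuclideanSpace ℝ (Fin n))⟫ ∈ Set.Icc (-C) C := by
      intro t
      have h1 : |⟪w, (t : EuclideanSpace ℝ (Fin n))⟫| ≤ ‖w‖ * ‖(t : EuclideanSpace ℝ (Fin n))‖ :=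
        abs_real_inner_le_norm _ _
      have h2 : ‖(t : EuclideanSpace ℝ (Fin n))‖ ≤ R := by
        have := hR t.2
        rwa [Metric.mem_closedBall, dist_zero_right] at this
      have h3 : ‖w‖ * ‖(t : EuclideanSpace ℝ (Fin n))‖ ≤ ‖w‖ * |R| :=
        mul_le_mul_of_nonneg_left (le_trans h2 (le_abs_self R)) (norm_nonneg w)
      have h4 : |⟪w, (t : EuclideanSpace ℝ (Fin n))⟫| ≤ C := by rw [hC]; linarith
      rw [abs_le] at h4
      exact ⟨h4.1, h4.2⟩
    obtain ⟨m, a, b, c, hab⟩ := approx1d σ hσ_mono hσ_top hσ_bot Real.exp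
      Real.continuous_exp (-C) C (by linarith) (ε/2) (by linarith)
    set g : C(K, ℝ) := ∑ j : Fin m, c j •
      (⟨fun t : K => σ (⟪a j • w, (t : EuclideanSpace ℝ (Fin n))⟫ + b j),
        hσ_cont.comp ((hinner_cont _).add continuous_const)⟩ : C(K, ℝ)) with hg
    have hgS : g ∈ S := Submodule.sum_mem _ (fun j _ => Submodule.smul_mem _ _ (hbasic _ _))
    refine ⟨g, hgS, ?_⟩
    have hd : dist (expmap w) g ≤ ε/2 := by
      rw [ContinuousMap.dist_le (by linarith)]
      intro t
      have hgt : g t = ∑ j : Fin m, c j * σ (a j * ⟪w, (t : EuclideanSpace ℝ (Fin n))⟫ + b j) := by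
        rw [hg]
        rw [ContinuousMap.sum_apply]
        refine Finset.sum_congr rfl (fun j _ => ?_)
        rw [ContinuousMap.smul_apply]
        simp only [ContinuousMap.coe_mk, smul_eq_mul]
        rw [real_inner_smul_left]
      rw [Real.dist_eq, hgt]
      exact hab _ (hrange t)
    linarith [hd]
  -- exponentials form a submonoid
  set Esub : Submonoid C(K, ℝ) :=
    { carrier := Set.range expmap
      one_mem' := ⟨0, by
        ext t
        simp only [hexpmap, ContinuousMap.coe_mk, ContinuousMap.one_apply]
        rw [inner_zero_left, Real.exp_zero]⟩
      mul_mem' := by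
        rintro f1 f2 ⟨w1, rfl⟩ ⟨w2, rfl⟩
        refine ⟨w1 + w2, ?_⟩
        ext t
        simp only [hexpmap, ContinuousMap.coe_mk, ContinuousMap.mul_apply]
        rw [inner_add_left, Real.exp_add] } with hEsub
  -- Stone-Weierstrass for the subalgebra generated by exponentials
  have hsep : (Algebra.adjoin ℝ (Set.range expmap)).SeparatesPoints := by
    intro t1 t2 hne
    refine ⟨expmap ((t1:EuclideanSpace ℝ (Fin n)) - t2), ?_, ?_⟩
    · exact ⟨expmap _, Algebra.subset_adjoin ⟨_, rfl⟩, rfl⟩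
    · simp only [hexpmap, ContinuousMap.coe_mk]
      intro hcon
      have h2 : ⟪(t1:EuclideanSpace ℝ (Fin n)) - t2, (t1:EuclideanSpace ℝ (Fin n))⟫ =
          ⟪(t1:EuclideanSpace ℝ (Fin n)) - t2, (t2:EuclideanSpace ℝ (Fin n))⟫ :=
        Real.exp_eq_exp.1 hcon
      have h3 : ⟪(t1:EuclideanSpace ℝ (Fin n)) - t2,
          (t1:EuclideanSpace ℝ (Fin n)) - (t2:EuclideanSpace ℝ (Fin n))⟫ = 0 := by
        rw [inner_sub_right, h2, sub_self]
      have hcoe : (t1:EuclideanSpace ℝ (Fin n)) ≠ t2 := Subtype.coe_injective.ne hne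
      exact hcoe (sub_eq_zero.1 (inner_self_eq_zero.1 h3))
  have htop : (Algebra.adjoin ℝ (Set.range expmap)).topologicalClosure = ⊤ :=
    ContinuousMap.subalgebra_topologicalClosure_eq_top_of_separatesPoints _ hsep
  -- adjoin ⊆ span of exponentials ⊆ closure S
  have hadj_sub : (Algebra.adjoin ℝ (Set.range expmap) : Set C(K, ℝ)) ⊆
      closure (S : Set C(K, ℝ)) := by
    intro f hf
    have h1 : f ∈ Subalgebra.toSubmodule (Algebra.adjoin ℝ (Set.range expmap)) := hf
    rw [Algebra.adjoin_eq_span] at h1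
    have h2 : f ∈ Submodule.span ℝ (Set.range expmap) := by
      refine Submodule.span_le.2 ?_ h1
      have : Submonoid.closure (Set.range expmap) ≤ Esub :=
        Submonoid.closure_le.2 (le_refl _)
      exact fun x hx => Submodule.subset_span (this hx)
    have h3 : Submodule.span ℝ (Set.range expmap) ≤ S.topologicalClosure := by
      rw [Submodule.span_le]
      intro x hx
      obtain ⟨w, rfl⟩ := hx
      exact hexp_cl w
    exact h3 h2
  -- conclude
  rw [dense_iff_closure_eq]
  have huniv : (Set.univ : Set C(K, ℝ)) ⊆ closure (S : Set C(K, ℝ)) := by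
    have h1 : (Set.univ : Set C(K, ℝ)) =
        ((Algebra.adjoin ℝ (Set.range expmap)).topologicalClosure : Set C(K, ℝ)) := by
      rw [htop]; rfl
    rw [h1]
    have h2 : ((Algebra.adjoin ℝ (Set.range expmap)).topologicalClosure : Set C(K, ℝ)) =
        closure ((Algebra.adjoin ℝ (Set.range expmap) : Set C(K, ℝ))) := rfl
    rw [h2]
    exact closure_minimal hadj_sub isClosed_closure
  exact Set.eq_univ_of_univ_subset huniv

end Density

set_option maxHeartbeats 1000000 in
/-- universal approximation of functions on a compact set, uniformly over a
compact family `V ⊆ C(Ω̄_Y)`: for a bounded sigmoidal `σ` and every `ε > 0` there exist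
`N`, inner weights `w_j ∈ ℝⁿ`, `ζ_j ∈ ℝ` (independent of the target) such that every
`y ∈ V` admits outer coefficients `c_j(y)` with
`sup_{t ∈ Ω̄_Y} |y(t) − ∑_j c_j σ(w_jᵀ t + ζ_j)| < ε`. -/
theorem stmt18 {n : ℕ} (σ : ℝ → ℝ)
    (hσ_bdd : ∃ Mb : ℝ, ∀ t : ℝ, |σ t| ≤ Mb)
    (hσ_mono : StrictMono σ) (hσ_diff : Differentiable ℝ σ)
    (hσ_top : Filter.Tendsto σ Filter.atTop (nhds 1))
    (hσ_bot : Filter.Tendsto σ Filter.atBot (nhds 0))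
    (ΩY : Set (EuclideanSpace ℝ (Fin n))) (hΩY_open : IsOpen ΩY) (hΩY_ne : ΩY.Nonempty)
    (hΩY_bdd : Bornology.IsBounded ΩY)
    (V : Set C(closure ΩY, ℝ)) (hV : IsCompact V) :
    ∀ ε : ℝ, 0 < ε →
      ∃ (N : ℕ) (w : Fin N → EuclideanSpace ℝ (Fin n)) (ζ : Fin N → ℝ),
        ∀ y ∈ V, ∃ c : Fin N → ℝ,
          ∀ t : closure ΩY,
            |y t - ∑ j, c j * σ (⟪w j, (t : EuclideanSpace ℝ (Fin n))⟫ + ζ j)| < ε := by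
  intro ε hε
  set K : Set (EuclideanSpace ℝ (Fin n)) := closure ΩY with hKdef
  have hK : IsCompact K := Metric.isCompact_of_isClosed_isBounded isClosed_closure hΩY_bdd.closure
  haveI : CompactSpace K := isCompact_iff_compactSpace.1 hK
  set gens : Set C(K, ℝ) := {f : C(K, ℝ) | ∃ (w : EuclideanSpace ℝ (Fin n)) (ζ : ℝ),
      ∀ t : K, f t = σ (⟪w, (t : EuclideanSpace ℝ (Fin n))⟫ + ζ)} with hgens
  have hdense : Dense (↑(Submodule.span ℝ gens) : Set C(K, ℝ)) :=
    dense_sigspan σ hσ_mono hσ_diff.continuous hσ_top hσ_bot K hK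
  -- finite net for V
  obtain ⟨t, htV, hcover⟩ := hV.elim_nhds_subcover (fun y => Metric.ball y (ε/4))
    (fun y _ => Metric.ball_mem_nhds y (by linarith))
  -- representation for each net point
  have hrep : ∀ y₀ : C(K, ℝ), ∃ (Np : ℕ) (cc : Fin Np → ℝ)
      (ww : Fin Np → EuclideanSpace ℝ (Fin n)) (zz : Fin Np → ℝ),
      ∀ s : K, |y₀ s - ∑ j, cc j * σ (⟪ww j, (s : EuclideanSpace ℝ (Fin n))⟫ + zz j)| < ε/2 := by
    intro y₀
    have hy₀ : y₀ ∈ closure (↑(Submodule.span ℝ gens) : Set C(K, ℝ)) := hdense y₀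
    rw [Metric.mem_closure_iff] at hy₀
    obtain ⟨g, hgS, hgd⟩ := hy₀ (ε/4) (by linarith)
    have hgS' : g ∈ Submodule.span ℝ gens := hgS
    rw [Submodule.mem_span_set'] at hgS'
    obtain ⟨Np, cf, gf, hgsum⟩ := hgS'
    choose ww zz hwz using fun i => (gf i).2
    refine ⟨Np, cf, ww, zz, ?_⟩
    intro s
    have hgs : g s = ∑ j, cf j * σ (⟪ww j, (s : EuclideanSpace ℝ (Fin n))⟫ + zz j) := by
      rw [← hgsum]
      rw [ContinuousMap.sum_apply]
      refine Finset.sum_congr rfl (fun j _ => ?_)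
      rw [ContinuousMap.smul_apply, smul_eq_mul, hwz j s]
    have hpt : |y₀ s - g s| ≤ dist y₀ g := by
      have := ContinuousMap.dist_apply_le_dist (f := y₀) (g := g) s
      rwa [Real.dist_eq] at this
    rw [hgs] at hpt
    calc |y₀ s - ∑ j, cf j * σ (⟪ww j, (s : EuclideanSpace ℝ (Fin n))⟫ + zz j)| ≤ dist y₀ g := hpt
    _ < ε/4 := hgd
    _ < ε/2 := by linarith
  choose Np cc ww zz happrox using hrep
  -- combine over the net
  classical
  refine ⟨Fintype.card (Σ y : {y₀ : C(K, ℝ) // y₀ ∈ t}, Fin (Np y.val)), ?_, ?_, ?_⟩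
  · exact fun j => ww ((Fintype.equivFin _).symm j).1.val ((Fintype.equivFin _).symm j).2
  · exact fun j => zz ((Fintype.equivFin _).symm j).1.val ((Fintype.equivFin _).symm j).2
  intro y hy
  obtain ⟨y₀, hy₀t, hy₀b⟩ := Set.mem_iUnion₂.1 (hcover hy)
  set i₀ : {y₀ : C(K, ℝ) // y₀ ∈ t} := ⟨y₀, hy₀t⟩ with hi₀
  set cI : (Σ y : {y₀ : C(K, ℝ) // y₀ ∈ t}, Fin (Np y.val)) → ℝ := fun i =>
    if h : i.1 = i₀ then cc y₀ (Fin.cast (congrArg (fun z => Np z.val) h) i.2) else 0 with hcI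
  refine ⟨fun j => cI ((Fintype.equivFin _).symm j), ?_⟩
  intro s
  set F : (Σ y : {y₀ : C(K, ℝ) // y₀ ∈ t}, Fin (Np y.val)) → ℝ := fun i =>
    cI i * σ (⟪ww i.1.val i.2, (s : EuclideanSpace ℝ (Fin n))⟫ + zz i.1.val i.2) with hF
  have hsum : ∑ j, cI ((Fintype.equivFin _).symm j) *
      σ (⟪ww ((Fintype.equivFin _).symm j).1.val ((Fintype.equivFin _).symm j).2,
          (s : EuclideanSpace ℝ (Fin n))⟫ +
        zz ((Fintype.equivFin _).symm j).1.val ((Fintype.equivFin _).symm j).2) =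
      ∑ j, cc y₀ j * σ (⟪ww y₀ j, (s : EuclideanSpace ℝ (Fin n))⟫ + zz y₀ j) := by
    have h1 : ∑ j, cI ((Fintype.equivFin _).symm j) *
        σ (⟪ww ((Fintype.equivFin _).symm j).1.val ((Fintype.equivFin _).symm j).2,
            (s : EuclideanSpace ℝ (Fin n))⟫ +
          zz ((Fintype.equivFin _).symm j).1.val ((Fintype.equivFin _).symm j).2) =
        ∑ i, F i := Equiv.sum_comp (Fintype.equivFin _).symm F
    rw [h1, ← Finset.univ_sigma_univ, Finset.sum_sigma]
    rw [Fintype.sum_eq_single i₀ ?side]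
    case side =>
      intro y' hy'
      refine Finset.sum_eq_zero (fun b _ => ?_)
      have hz : cI ⟨y', b⟩ = 0 := dif_neg hy'
      rw [hF]
      simp only []
      rw [hz, zero_mul]
    refine Finset.sum_congr rfl (fun b _ => ?_)
    have hpos : cI ⟨i₀, b⟩ = cc y₀ (Fin.cast (congrArg (fun z : {y₀ : C(K, ℝ) // y₀ ∈ t} => Np z.val) (rfl : i₀ = i₀)) b) := dif_pos rfl
    have hcast : (Fin.cast (congrArg (fun z : {y₀ : C(K, ℝ) // y₀ ∈ t} => Np z.val) (rfl : i₀ = i₀)) b) = b := by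
      apply Fin.ext
      simp [Fin.coe_cast]
    rw [hF]
    simp only []
    rw [hpos, hcast]
  rw [hsum]
  have h1 : |y s - y₀ s| ≤ dist y y₀ := by
    have := ContinuousMap.dist_apply_le_dist (f := y) (g := y₀) s
    rwa [Real.dist_eq] at this
  have h2 : dist y y₀ < ε/4 := Metric.mem_ball.1 hy₀b
  have h3 := happrox y₀ s
  calc |y s - ∑ j, cc y₀ j * σ (⟪ww y₀ j, (s : EuclideanSpace ℝ (Fin n))⟫ + zz y₀ j)|
      ≤ |y s - y₀ s| + |y₀ s - ∑ j, cc y₀ j * σ (⟪ww y₀ j, (s : EuclideanSpace ℝ (Fin n))⟫ + zz y₀ j)| := by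
        have := abs_add_le (y s - y₀ s) (y₀ s - ∑ j, cc y₀ j * σ (⟪ww y₀ j, (s : EuclideanSpace ℝ (Fin n))⟫ + zz y₀ j))
        rw [show y s - y₀ s + (y₀ s - ∑ j, cc y₀ j * σ (⟪ww y₀ j, (s : EuclideanSpace ℝ (Fin n))⟫ + zz y₀ j)) = y s - ∑ j, cc y₀ j * σ (⟪ww y₀ j, (s : EuclideanSpace ℝ (Fin n))⟫ + zz y₀ j) by ring] at this
        exact this
  _ < ε/4 + ε/2 := by
      have := lt_of_le_of_lt h1 h2
      exact add_lt_add this h3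
  _ < ε := by linarith
end
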